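/- arXiv:0810.2048 — 2 statements merged into one kernel-verified Lean document; each statement's English description precedes it below -/
import Mathlib

section
/- Let $a_0,\dots,a_{k-1}$ be real numbers, $h < A$ reals with $a_i \ge h$ for all $i$ and $\sum_{i=0}^{k-1} a_i \le kA$. Then for every $\epsilon > 0$ there exist integers $0 \le k_1 < \dots < k_l \le k-1$ with $l \ge k\,\epsilon/(A+\epsilon-h)$ such that $\sum_{j=k_i}^{n} a_j \le (n-k_i+1)(A+\epsilon)$ for every $1 \le i \le l$ and every $n$ with $k_i \le n \le k-1$. -/
open Finset in
/-- Pliss' Lemma. -/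
theorem stmt_0 (k : ℕ) (hk : 0 < k) (a : ℕ → ℝ) (h A : ℝ) (hhA : h < A)
    (hbelow : ∀ i < k, h ≤ a i)
    (hsum : ∑ i ∈ Finset.range k, a i ≤ (k : ℝ) * A)
    (ε : ℝ) (hε : 0 < ε) :
    ∃ (l : ℕ) (ks : Fin l → ℕ),
      StrictMono ks ∧
      (∀ i, ks i ≤ k - 1) ∧
      ((k : ℝ) * ε / (A + ε - h) ≤ (l : ℝ)) ∧
      (∀ (i : Fin l) (n : ℕ), ks i ≤ n → n ≤ k - 1 →
        ∑ j ∈ Finset.Icc (ks i) n, a j ≤ ((n : ℝ) - (ks i : ℝ) + 1) * (A + ε)) := by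
  classical
  set S : ℕ → ℝ := fun n => ∑ j ∈ Finset.range n, (a j - (A + ε)) with hS
  set P : Finset ℕ := (Finset.range k).filter
    (fun i => ∀ m, i < m → m ≤ k → S m ≤ S i) with hP
  have hpos : 0 < A + ε - h := by linarith
  -- the max function
  have hne : ∀ i, i ≤ k → (Finset.Icc i k).Nonempty := fun i hi =>
    ⟨i, Finset.mem_Icc.mpr ⟨le_refl i, hi⟩⟩
  set M : ℕ → ℝ := fun i => if hi : i ≤ k then (Finset.Icc i k).sup' (hne i hi) S else 0
    with hM
  have hMeq : ∀ (i : ℕ) (hi : i ≤ k), M i = (Finset.Icc i k).sup' (hne i hi) S := by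
    intro i hi; simp [hM, hi]
  have hSleM : ∀ i, i ≤ k → S i ≤ M i := by
    intro i hi
    rw [hMeq i hi]
    exact Finset.le_sup' S (Finset.mem_Icc.mpr ⟨le_refl i, hi⟩)
  -- per-step bound
  have hstep : ∀ i ∈ Finset.range k,
      M i - M (i + 1) ≤ if i ∈ P then A + ε - h else 0 := by
    intro i hi
    rw [Finset.mem_range] at hi
    have hik : i ≤ k := hi.le
    have hik1 : i + 1 ≤ k := hi
    have hM1 : S (i + 1) ≤ M (i + 1) := hSleM _ hik1
    by_cases hiP : i ∈ P
    · simp only [hiP, if_true]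
      have hprop : ∀ m, i < m → m ≤ k → S m ≤ S i :=
        (Finset.mem_filter.mp hiP).2
      have hMi : M i ≤ S i := by
        rw [hMeq i hik]
        apply Finset.sup'_le
        intro m hm
        rw [Finset.mem_Icc] at hm
        rcases eq_or_lt_of_le hm.1 with rfl | hlt
        · exact le_refl _
        · exact hprop m hlt hm.2
      have hSi : S (i + 1) = S i + (a i - (A + ε)) := by
        simp [hS, Finset.sum_range_succ]
        push_cast
        ring
      have hai : h ≤ a i := hbelow i hi
      linarith
    · simp only [hiP, if_false]
      -- i not a Pliss time: ∃ m > i, m ≤ k, S i < S m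
      have : ∃ m, i < m ∧ m ≤ k ∧ S i < S m := by
        have := Finset.mem_filter.not.mp hiP
        push_neg at this
        obtain ⟨m, h1, h2, h3⟩ := this (Finset.mem_range.mpr hi)
        exact ⟨m, h1, h2, h3⟩
      obtain ⟨m, hm1, hm2, hm3⟩ := this
      have hSiM : S i ≤ M (i + 1) := by
        rw [hMeq (i + 1) hik1]
        exact le_trans hm3.le (Finset.le_sup' S (Finset.mem_Icc.mpr ⟨hm1, hm2⟩))
      have hMi : M i ≤ M (i + 1) := by
        rw [hMeq i hik]
        apply Finset.sup'_le
        intro j hj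
        rw [Finset.mem_Icc] at hj
        rcases eq_or_lt_of_le hj.1 with rfl | hlt
        · exact hSiM
        · rw [hMeq (i + 1) hik1]
          exact Finset.le_sup' S (Finset.mem_Icc.mpr ⟨hlt, hj.2⟩)
      linarith
  -- telescoping
  have htel : M 0 - M k = ∑ i ∈ Finset.range k, (M i - M (i + 1)) :=
    (Finset.sum_range_sub' M k).symm
  have hsum2 : ∑ i ∈ Finset.range k, (M i - M (i + 1))
      ≤ (P.card : ℝ) * (A + ε - h) := by
    calc ∑ i ∈ Finset.range k, (M i - M (i + 1))
        ≤ ∑ i ∈ Finset.range k, (if i ∈ P then A + ε - h else 0) :=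
          Finset.sum_le_sum hstep
      _ = ∑ i ∈ P, (A + ε - h) := by
          rw [Finset.sum_ite_mem, Finset.inter_eq_right.mpr]
          intro x hx
          exact Finset.mem_of_mem_filter x hx
      _ = (P.card : ℝ) * (A + ε - h) := by
          rw [Finset.sum_const, nsmul_eq_mul]
  have hM0 : (0 : ℝ) ≤ M 0 := by
    have := hSleM 0 (Nat.zero_le k)
    simpa [hS] using this
  have hMk : M k ≤ -(k * ε) := by
    have : M k = S k := by
      rw [hMeq k (le_refl k)]
      apply le_antisymm
      · apply Finset.sup'_le
        intro m hm
        rw [Finset.mem_Icc] at hm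
        have : m = k := le_antisymm hm.2 hm.1
        rw [this]
      · exact Finset.le_sup' S (Finset.mem_Icc.mpr ⟨le_refl k, le_refl k⟩)
    rw [this]
    have : S k = (∑ i ∈ Finset.range k, a i) - k * (A + ε) := by
      simp only [hS, Finset.sum_sub_distrib, Finset.sum_const, Finset.card_range,
        nsmul_eq_mul]
    rw [this]
    have : (k : ℝ) * (A + ε) = k * A + k * ε := by ring
    linarith
  have hcard : (k : ℝ) * ε ≤ (P.card : ℝ) * (A + ε - h) := by linarith
  -- build the answer
  refine ⟨P.card, fun i => P.orderIsoOfFin rfl i, ?_, ?_, ?_, ?_⟩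
  · intro i j hij
    exact Subtype.coe_lt_coe.mpr ((P.orderIsoOfFin rfl).strictMono hij)
  · intro i
    have hmem : ((P.orderIsoOfFin rfl i : {x // x ∈ P}) : ℕ) ∈ P :=
      (P.orderIsoOfFin rfl i).2
    have := Finset.mem_range.mp (Finset.mem_of_mem_filter _ hmem)
    show ((P.orderIsoOfFin rfl i : {x // x ∈ P}) : ℕ) ≤ k - 1
    omega
  · rw [div_le_iff₀ hpos]
    exact hcard
  · intro i n hn1 hn2
    simp only at hn1 hn2 ⊢
    set x : ℕ := (P.orderIsoOfFin rfl i : ℕ) with hx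
    have hmem : x ∈ P := (P.orderIsoOfFin rfl i).2
    have hprop : ∀ m, x < m → m ≤ k → S m ≤ S x := (Finset.mem_filter.mp hmem).2
    have hnk : n + 1 ≤ k := by omega
    have hkey : S (n + 1) ≤ S x := hprop (n + 1) (by omega) hnk
    have hsplit : S (n + 1) - S x = ∑ j ∈ Finset.Icc x n, (a j - (A + ε)) := by
      rw [← Finset.Ico_add_one_right_eq_Icc, ← Finset.sum_Ico_eq_sub _ (by omega : x ≤ n + 1)]
    have h1 : ∑ j ∈ Finset.Icc x n, (a j - (A + ε)) ≤ 0 := by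
      rw [← hsplit]; linarith
    rw [Finset.sum_sub_distrib, Finset.sum_const, nsmul_eq_mul] at h1
    have hcardIcc : ((Finset.Icc x n).card : ℝ) = (n : ℝ) - (x : ℝ) + 1 := by
      rw [Nat.card_Icc]
      have : x ≤ n := hn1
      push_cast [Nat.cast_sub (by omega : x ≤ n + 1)]
      ring
    rw [hcardIcc] at h1
    linarith
end

section
/- Let $M$ be a compact metric space, $f: M \to M$ continuous, and let $\zeta: M \to \mathbb{R}$ be continuous. Let $\mu$ be an $f$-ergodic invariant Borel probability with $\int \zeta\, d\mu < \lambda + \epsilon$ for reals $\lambda, \epsilon$ with $\epsilon > 0$, and let $h = \inf_M \zeta$. Define $H = \{x \in M : \sum_{j=0}^{n-1} \zeta(f^j(x)) \le n(\lambda + 3\epsilon) \ \forall n \ge 1\}$. Then $\mu(H) \ge \epsilon/(\lambda + 4\epsilon - h)$ provided $\lambda + 4\epsilon > h$. -/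
open MeasureTheory

/-- Pliss' Lemma combined with Birkhoff's ergodic theorem: the set of points with
uniformly good Birkhoff sums at all times has measure at least `ε/(λ + 4ε - h)`. -/
theorem stmt_8 {M : Type*} [MetricSpace M] [CompactSpace M] [MeasurableSpace M] [BorelSpace M]
    (f : M → M) (hf : Continuous f) (μ : Measure M) [IsProbabilityMeasure μ]
    (hErg : Ergodic f μ) (ζ : M → ℝ) (hζ : Continuous ζ)
    (lam eps h : ℝ) (heps : 0 < eps)
    (hh : h = sInf (Set.range ζ))
    (hint : ∫ x, ζ x ∂μ < lam + eps)
    (hgt : h < lam + 4 * eps) :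
    eps / (lam + 4 * eps - h) ≤
      (μ {x | ∀ n : ℕ, 1 ≤ n →
        ∑ j ∈ Finset.range n, ζ (f^[j] x) ≤ (n : ℝ) * (lam + 3 * eps)}).toReal := by
  classical
  set A : ℝ := lam + 3 * eps with hA
  set φ : M → ℝ := fun x => ζ x - A with hφdef
  have hφc : Continuous φ := hζ.sub continuous_const
  have hmp : MeasurePreserving f μ μ := hErg.toMeasurePreserving
  have hfm : Measurable f := hf.measurable
  set S : ℕ → M → ℝ := fun n x => birkhoffSum f φ n x with hS
  have hScont : ∀ n, Continuous (S n) := by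
    intro n
    have : S n = fun x => ∑ i ∈ Finset.range n, φ (f^[i] x) := rfl
    rw [this]
    exact continuous_finset_sum _ fun i _ => hφc.comp (hf.iterate i)
  have hSint : ∀ n, Integrable (S n) μ :=
    fun n => (hScont n).integrable_of_hasCompactSupport (HasCompactSupport.of_compactSpace _)
  have hζint : Integrable ζ μ :=
    hζ.integrable_of_hasCompactSupport (HasCompactSupport.of_compactSpace _)
  have hφint : Integrable φ μ := hζint.sub (integrable_const A)
  have hhle : ∀ x, h ≤ ζ x := fun x =>
    hh ▸ csInf_le (isCompact_range hζ).bddBelow (Set.mem_range_self x)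
  have hhint : h ≤ ∫ x, ζ x ∂μ := by
    have := integral_mono (integrable_const h) hζint (fun x => hhle x)
    simpa using this
  set E : ℕ → Set M := fun N => {x | ∃ n, 1 ≤ n ∧ n ≤ N ∧ 0 < S n x} with hE
  have hEmeas : ∀ N, MeasurableSet (E N) := by
    intro N
    have : E N = ⋃ n ∈ Finset.Icc 1 N, {x | 0 < S n x} := by
      ext x
      simp [hE, Finset.mem_Icc, and_assoc]
    rw [this]
    exact (Finset.Icc 1 N).measurableSet_biUnion fun n _ =>
      (isOpen_lt continuous_const (hScont n)).measurableSet
  -- Garsia's maximal ergodic inequality for each N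
  have key : ∀ N : ℕ, 0 ≤ ∫ x in E N, φ x ∂μ := by
    intro N
    have hne : (Finset.range (N + 1)).Nonempty := Finset.nonempty_range_iff.mpr (Nat.succ_ne_zero N)
    set G : M → ℝ := fun x => (Finset.range (N + 1)).sup' hne (fun n => S n x) with hG
    have hGc : Continuous G := by
      apply continuous_iff_continuousAt.mpr
      intro x
      exact ContinuousAt.finset_sup'_apply hne fun i _ => (hScont i).continuousAt
    have hGint : Integrable G μ :=
      hGc.integrable_of_hasCompactSupport (HasCompactSupport.of_compactSpace _)
    have hGfint : Integrable (fun x => G (f x)) μ :=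
      (hGc.comp hf).integrable_of_hasCompactSupport (HasCompactSupport.of_compactSpace _)
    have hclaim : ∀ x, G x - G (f x) ≤ Set.indicator (E N) φ x := by
      intro x
      have hS0 : S 0 x = 0 := by simp [hS]
      by_cases hx : x ∈ E N
      · rw [Set.indicator_of_mem hx]
        obtain ⟨m, hm, hGx⟩ := Finset.exists_mem_eq_sup' hne (fun n => S n x)
        obtain ⟨n, hn1, hnN, hnpos⟩ := hx
        have hGpos : 0 < G x :=
          lt_of_lt_of_le hnpos (Finset.le_sup' (fun k => S k x)
            (Finset.mem_range.mpr (Nat.lt_succ_of_le hnN)))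
        match m with
        | 0 =>
          have hGx' : G x = S 0 x := hGx
          rw [hGx', hS0] at hGpos; exact absurd hGpos (lt_irrefl 0)
        | (k + 1) =>
          have hk : k ∈ Finset.range (N + 1) := by
            rw [Finset.mem_range] at hm ⊢; omega
          have h1 : S (k + 1) x = φ x + S k (f x) := birkhoffSum_succ' f φ k x
          have h2 : S k (f x) ≤ G (f x) := Finset.le_sup' (fun n => S n (f x)) hk
          have hGx' : G x = S (k + 1) x := hGx
          rw [hGx', h1]
          linarith
      · rw [Set.indicator_of_notMem hx]
        have hGle : G x ≤ 0 := by
          apply Finset.sup'_le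
          intro n hn
          rcases Nat.eq_zero_or_pos n with rfl | hn1
          · exact le_of_eq hS0
          · by_contra hc
            exact hx ⟨n, hn1, Nat.lt_succ_iff.mp (Finset.mem_range.mp hn), lt_of_not_ge hc⟩
        have hGf0 : 0 ≤ G (f x) := by
          have : S 0 (f x) ≤ G (f x) :=
            Finset.le_sup' (fun n => S n (f x)) (Finset.mem_range.mpr (Nat.succ_pos N))
          simpa [hS] using this
        linarith
    have hzero : ∫ x, (G x - G (f x)) ∂μ = 0 := by
      rw [integral_sub hGint hGfint]
      have : ∫ y, G y ∂(Measure.map f μ) = ∫ x, G (f x) ∂μ :=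
        integral_map hfm.aemeasurable hGc.aestronglyMeasurable
      rw [hmp.map_eq] at this
      rw [← this, sub_self]
    calc (0 : ℝ) = ∫ x, (G x - G (f x)) ∂μ := hzero.symm
      _ ≤ ∫ x, Set.indicator (E N) φ x ∂μ :=
          integral_mono (hGint.sub hGfint) (hφint.indicator (hEmeas N)) hclaim
      _ = ∫ x in E N, φ x ∂μ := integral_indicator (hEmeas N)
  -- measure lower bound for each N
  have mbound : ∀ N : ℕ, A - ∫ x, ζ x ∂μ ≤ (A - h) * (μ (E N)ᶜ).toReal := by
    intro N
    have hsplit : (∫ x in E N, φ x ∂μ) + ∫ x in (E N)ᶜ, φ x ∂μ = ∫ x, φ x ∂μ :=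
      integral_add_compl (hEmeas N) hφint
    have hφval : ∫ x, φ x ∂μ = (∫ x, ζ x ∂μ) - A := by
      rw [hφdef]
      rw [integral_sub hζint (integrable_const A)]
      simp
    have hlow : (h - A) * (μ (E N)ᶜ).toReal ≤ ∫ x in (E N)ᶜ, φ x ∂μ := by
      have hmono := setIntegral_mono_on (f := fun _ => h - A) (g := φ)
        ((integrableOn_const_iff).mpr (Or.inr (measure_lt_top μ _))) hφint.integrableOn
        (hEmeas N).compl (fun x _ => sub_le_sub_right (hhle x) A)
      rw [setIntegral_const] at hmono
      simpa [smul_eq_mul, mul_comm, Measure.real] using hmono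
    have hkey := key N
    linarith
  -- identify the target set
  have hSval : ∀ (n : ℕ) (x : M), S n x = (∑ j ∈ Finset.range n, ζ (f^[j] x)) - n * A := by
    intro n x
    simp only [hS, birkhoffSum, hφdef, Finset.sum_sub_distrib, Finset.sum_const,
      Finset.card_range, nsmul_eq_mul]
  have hTeq : {x : M | ∀ n : ℕ, 1 ≤ n →
      ∑ j ∈ Finset.range n, ζ (f^[j] x) ≤ (n : ℝ) * A} = ⋂ N, (E N)ᶜ := by
    ext x
    simp only [Set.mem_iInter, Set.mem_compl_iff, Set.mem_setOf_eq, hE, not_exists]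
    constructor
    · intro hx N n
      intro hcon
      obtain ⟨h1, h2, h3⟩ := hcon
      have := hx n h1
      rw [hSval n x] at h3
      linarith
    · intro hx n hn
      have := hx n
      have h2 : ¬(1 ≤ n ∧ n ≤ n ∧ 0 < S n x) := this n
      have h3 : ¬(0 < S n x) := fun hc => h2 ⟨hn, le_refl n, hc⟩
      rw [hSval n x] at h3
      linarith [not_lt.mp h3]
  have hEmono : ∀ a b : ℕ, a ≤ b → (E b)ᶜ ⊆ (E a)ᶜ := by
    intro a b hab
    apply Set.compl_subset_compl.mpr
    rintro x ⟨n, h1, h2, h3⟩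
    exact ⟨n, h1, le_trans h2 hab, h3⟩
  have hd : Directed (· ⊇ ·) (fun N => (E N)ᶜ) := by
    intro a b
    exact ⟨max a b, hEmono a _ (le_max_left a b), hEmono b _ (le_max_right a b)⟩
  have hμT : μ {x : M | ∀ n : ℕ, 1 ≤ n →
      ∑ j ∈ Finset.range n, ζ (f^[j] x) ≤ (n : ℝ) * A} = ⨅ N, μ (E N)ᶜ := by
    rw [hTeq]
    exact Directed.measure_iInter (fun N => (hEmeas N).compl.nullMeasurableSet) hd
      ⟨0, measure_ne_top μ _⟩
  rw [← ENNReal.ofReal_le_iff_le_toReal (measure_ne_top μ _), hμT]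
  refine le_iInf fun N => ?_
  rw [ENNReal.ofReal_le_iff_le_toReal (measure_ne_top μ _)]
  set m := (μ (E N)ᶜ).toReal with hm
  have hm0 : 0 ≤ m := ENNReal.toReal_nonneg
  have hb := mbound N
  rw [div_le_iff₀ (by linarith : (0 : ℝ) < lam + 4 * eps - h)]
  nlinarith [mul_nonneg hm0 heps.le]
end
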